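/- Let H and K be complex Hilbert spaces, let M ⊆ B(H, K) be a linear subspace, and let B ∈ M with ‖B‖ ≤ 1. Suppose B is column extreme in M, i.e. the only A ∈ M satisfying A*A + B*B ≤ I (equivalently, I − A*A − B*B positive semidefinite) is A = 0. Then B is an extreme point of the closed unit ball {T ∈ M : ‖T‖ ≤ 1}: whenever T₁, T₂ ∈ M with ‖T₁‖ ≤ 1, ‖T₂‖ ≤ 1, and B = (T₁ + T₂)/2, one has T₁ = T₂ = B. -/

import Mathlib

noncomputable section

open ContinuousLinearMap in
/-- if `B` is a contraction in a linear subspace `M ⊆ B(H,K)` which is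
column extreme in `M` (the only `A ∈ M` with `A*A + B*B ≤ I` is `A = 0`), then `B` is
an extreme point of the closed unit ball of `M`. -/
theorem statement_11 {H K : Type*}
    [NormedAddCommGroup H] [InnerProductSpace ℂ H] [CompleteSpace H]
    [NormedAddCommGroup K] [InnerProductSpace ℂ K] [CompleteSpace K]
    (M : Submodule ℂ (H →L[ℂ] K)) (B : H →L[ℂ] K)
    (hBM : B ∈ M) (hB : ‖B‖ ≤ 1)
    (hCE : ∀ A : H →L[ℂ] K, A ∈ M →
      (1 - (adjoint A).comp A - (adjoint B).comp B).IsPositive → A = 0) :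
    ∀ T₁ T₂ : H →L[ℂ] K, T₁ ∈ M → T₂ ∈ M → ‖T₁‖ ≤ 1 → ‖T₂‖ ≤ 1 →
      B = (2 : ℂ)⁻¹ • (T₁ + T₂) → T₁ = B ∧ T₂ = B := by
  intro T₁ T₂ hT₁M hT₂M hT₁ hT₂ hBsum
  set D : H →L[ℂ] K := (2 : ℂ)⁻¹ • (T₁ - T₂) with hD
  have hDM : D ∈ M := M.smul_mem _ (M.sub_mem hT₁M hT₂M)
  have hBD₁ : B + D = T₁ := by
    rw [hBsum, hD]; module
  have hBD₂ : B - D = T₂ := by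
    rw [hBsum, hD]; module
  -- key pointwise estimate
  have key : ∀ x : H, ‖D x‖ ^ 2 + ‖B x‖ ^ 2 ≤ ‖x‖ ^ 2 := by
    intro x
    have h1 : ‖T₁ x‖ ≤ ‖x‖ := by
      calc ‖T₁ x‖ ≤ ‖T₁‖ * ‖x‖ := T₁.le_opNorm x
        _ ≤ 1 * ‖x‖ := by gcongr
        _ = ‖x‖ := one_mul _
    have h2 : ‖T₂ x‖ ≤ ‖x‖ := by
      calc ‖T₂ x‖ ≤ ‖T₂‖ * ‖x‖ := T₂.le_opNorm x
        _ ≤ 1 * ‖x‖ := by gcongr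
        _ = ‖x‖ := one_mul _
    have hpar : ‖B x + D x‖ ^ 2 + ‖B x - D x‖ ^ 2 = 2 * (‖B x‖ ^ 2 + ‖D x‖ ^ 2) := by
      have h := parallelogram_law_with_norm ℂ (B x) (D x)
      simp only [pow_two]; linarith
    have hx1 : ‖B x + D x‖ = ‖T₁ x‖ := by rw [← hBD₁]; simp
    have hx2 : ‖B x - D x‖ = ‖T₂ x‖ := by rw [← hBD₂]; simp
    have s1 : ‖T₁ x‖ ^ 2 ≤ ‖x‖ ^ 2 := pow_le_pow_left₀ (norm_nonneg _) h1 2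
    have s2 : ‖T₂ x‖ ^ 2 ≤ ‖x‖ ^ 2 := pow_le_pow_left₀ (norm_nonneg _) h2 2
    rw [hx1, hx2] at hpar
    linarith
  have hpos : (1 - (adjoint D).comp D - (adjoint B).comp B).IsPositive := by
    constructor
    · rw [← isSelfAdjoint_iff_isSymmetric, IsSelfAdjoint, star_eq_adjoint]
      simp only [map_sub, adjoint_comp, adjoint_adjoint]
      rw [show adjoint (1 : H →L[ℂ] H) = 1 from adjoint_id]
    · intro x
      have : (1 - (adjoint D).comp D - (adjoint B).comp B).reApplyInnerSelf x
          = ‖x‖ ^ 2 - ‖D x‖ ^ 2 - ‖B x‖ ^ 2 := by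
        simp only [reApplyInnerSelf, sub_apply, one_apply, comp_apply,
          inner_sub_left, adjoint_inner_left, inner_self_eq_norm_sq_to_K]
        simp [Complex.sub_re, ← Complex.ofReal_pow]
      rw [this]
      have := key x
      linarith
  have hD0 : D = 0 := hCE D hDM hpos
  refine ⟨?_, ?_⟩
  · rw [← hBD₁, hD0, add_zero]
  · rw [← hBD₂, hD0, sub_zero]

end
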